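/- Let n ≥ 2. For each j ∈ {1,…,n} and a, x ∈ {0,1}, let ρ^{(j)}_{a|x} be a 2×2 density matrix, set A^{(j)}_x = ρ^{(j)}_{0|x} − ρ^{(j)}_{1|x}, and let {M_s}_{s∈{0,1}^n} be a POVM on ℂ^{2^n}. Then Σ_{s∈{0,1}^n} Tr(M_s W_s) ≤ 2^n · 2√2(n−1); equivalently, the success metric S = (1/(2^n (n−1) 2√2)) Σ_s Tr(M_s W_s) satisfies S ≤ 1. -/

import Mathlib

open Matrix Finset ComplexOrder

noncomputable section

set_option linter.unusedSectionVars false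

/-- 2×2 complex matrices. -/
abbrev Mat2 := Matrix (Fin 2) (Fin 2) ℂ

/-- Tensor product of `n` 2×2 matrices, indexed by bit strings `Fin n → Fin 2`. -/
def tensorN (n : ℕ) (M : Fin n → Mat2) :
    Matrix (Fin n → Fin 2) (Fin n → Fin 2) ℂ :=
  Matrix.of fun f g => ∏ j, M j (f j) (g j)

/-- The operator `W_s` built from the observables `A^{(j)}_x`. -/
def Wop (n : ℕ) [NeZero n] (A : Fin n → Fin 2 → Mat2) (s : Fin n → Fin 2) :
    Matrix (Fin n → Fin 2) (Fin n → Fin 2) ℂ :=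
  (((n : ℂ) - 1) * (-1 : ℂ) ^ ((s 0 : ℕ))) •
      tensorN n (fun j => if j = 0 then A 0 0 + A 0 1 else A j 0)
    + ∑ j ∈ Finset.univ.filter (fun j : Fin n => j ≠ 0),
        ((-1 : ℂ) ^ ((s j : ℕ))) •
          tensorN n (fun k => if k = 0 then A 0 0 - A 0 1
            else if k = j then A j 1 else 1)

section Helpers

variable {m : Type*} [Fintype m] [DecidableEq m]

lemma psd_trace_nonneg {P : Matrix m m ℂ} (h : P.PosSemidef) : 0 ≤ P.trace := by
  rw [Matrix.trace]
  apply Finset.sum_nonneg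
  intro i _
  have := h.dotProduct_mulVec_nonneg (Pi.single i 1)
  simpa [dotProduct, Matrix.mulVec, Pi.single_apply, Finset.sum_ite_eq,
    Matrix.diag] using this

lemma psd_smul {c : ℂ} (hc : 0 ≤ c) {P : Matrix m m ℂ} (h : P.PosSemidef) :
    (c • P).PosSemidef := by
  have hcs : star c = c := by
    rw [Complex.star_def, Complex.conj_eq_iff_im]
    exact ((Complex.le_def.mp hc).2).symm
  refine Matrix.PosSemidef.of_dotProduct_mulVec_nonneg ?_ ?_
  · unfold Matrix.IsHermitian
    rw [Matrix.conjTranspose_smul, hcs, h.1]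
  · intro x
    rw [Matrix.smul_mulVec, dotProduct_smul]
    exact mul_nonneg hc (h.dotProduct_mulVec_nonneg x)

lemma trace_mul_nonneg {P Q : Matrix m m ℂ} (hP : P.PosSemidef) (hQ : Q.PosSemidef) :
    0 ≤ (P * Q).trace := by
  open scoped MatrixOrder Matrix.Norms.L2Operator in
  obtain ⟨B, rfl⟩ := CStarAlgebra.nonneg_iff_eq_star_mul_self.mp hP.nonneg
  rw [Matrix.mul_assoc, Matrix.trace_mul_comm]
  exact psd_trace_nonneg (hQ.mul_mul_conjTranspose_same B)

lemma psd_det_nonneg {P : Matrix m m ℂ} (h : P.PosSemidef) : 0 ≤ P.det := by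
  rw [h.1.det_eq_prod_eigenvalues]
  have : (0:ℂ) ≤ ∏ i, (h.1.eigenvalues i : ℂ) := by
    apply Finset.prod_nonneg
    intro i _
    rw [Complex.zero_le_real]
    exact h.eigenvalues_nonneg i
  simpa using this

lemma psd_sum {ι : Type*} (F : Finset ι) (P : ι → Matrix m m ℂ)
    (h : ∀ j ∈ F, (P j).PosSemidef) : (∑ j ∈ F, P j).PosSemidef :=
  Finset.sum_induction P _ (fun _ _ ha hb => ha.add hb) Matrix.PosSemidef.zero h

lemma herm_scalar_dom {T : Matrix m m ℂ} (hT : T.IsHermitian) {γ r : ℝ}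
    (hγ0 : 0 ≤ γ) (hγr : γ ≤ r ^ 2) (hr : 0 ≤ r) (hTT : T * T = (γ : ℂ) • 1) :
    ((r : ℂ) • 1 - T).PosSemidef ∧ ((r : ℂ) • 1 + T).PosSemidef := by
  rcases eq_or_lt_of_le hr with hr0 | hrpos
  · have hγ : γ = 0 := le_antisymm (by simpa [← hr0] using hγr) hγ0
    have hT0 : T = 0 := by
      have : Tᴴ * T = 0 := by rw [hT, hTT, hγ]; simp
      exact Matrix.conjTranspose_mul_self_eq_zero.mp this
    constructor <;> simp [hT0, ← hr0] <;> exact Matrix.PosSemidef.zero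
  · have key : ∀ S : Matrix m m ℂ, S.IsHermitian → S * S = (γ:ℂ) • 1 →
        (((r:ℂ) • 1 - S)).PosSemidef := by
      intro S hS hSS
      have hid : (2 * r : ℂ) • ((r:ℂ) • 1 - S)
          = ((r:ℂ) • 1 - S) * ((r:ℂ) • 1 - S)ᴴ + ((r^2 - γ : ℝ) : ℂ) • 1 := by
        rw [Matrix.conjTranspose_sub, Matrix.conjTranspose_smul, hS,
          Matrix.conjTranspose_one]
        push_cast
        rw [Matrix.sub_mul, Matrix.mul_sub, Matrix.mul_sub, hSS]
        simp only [Matrix.smul_mul, Matrix.mul_smul, Matrix.one_mul, Matrix.mul_one,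
          Complex.star_def, Complex.conj_ofReal, smul_smul]
        ext i j
        simp [Matrix.sub_apply, Matrix.add_apply, Matrix.smul_apply]
        ring
      have hpsd : ((2 * r : ℂ) • ((r:ℂ) • 1 - S)).PosSemidef := by
        rw [hid]
        refine (Matrix.posSemidef_self_mul_conjTranspose _).add (psd_smul ?_ Matrix.PosSemidef.one)
        rw [Complex.zero_le_real]; nlinarith
      have h2r : (2 * (r:ℂ)) ≠ 0 := by
        simp only [ne_eq, mul_eq_zero, not_or]
        exact ⟨two_ne_zero, Complex.ofReal_ne_zero.mpr (by positivity)⟩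
      have hinv : (0:ℂ) ≤ (2 * (r:ℂ))⁻¹ := by
        rw [show (2 * (r:ℂ))⁻¹ = (((2*r)⁻¹ : ℝ) : ℂ) by push_cast; ring, Complex.zero_le_real]
        positivity
      have := psd_smul hinv hpsd
      rwa [smul_smul, inv_mul_cancel₀ h2r, one_smul] at this
    refine ⟨key T hT hTT, ?_⟩
    have := key (-T) (by unfold Matrix.IsHermitian at *; simp [hT]) (by simpa using hTT)
    simpa [sub_neg_eq_add] using this

end Helpers

section TensorLemmas

lemma tensorN_mul (n : ℕ) (M N : Fin n → Mat2) :
    tensorN n M * tensorN n N = tensorN n (fun j => M j * N j) := by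
  ext f g
  simp only [tensorN, Matrix.mul_apply, Matrix.of_apply]
  simp_rw [← Finset.prod_mul_distrib]
  rw [Finset.prod_univ_sum]
  rw [Fintype.piFinset_univ]

lemma tensorN_conjTranspose (n : ℕ) (M : Fin n → Mat2) :
    (tensorN n M)ᴴ = tensorN n (fun j => (M j)ᴴ) := by
  ext f g
  simp only [tensorN, Matrix.conjTranspose_apply, Matrix.of_apply, star_prod]

lemma tensorN_one (n : ℕ) : tensorN n (fun _ => (1 : Mat2)) = 1 := by
  ext f g
  simp only [tensorN, Matrix.of_apply, Matrix.one_apply]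
  by_cases h : f = g
  · subst h; simp
  · rw [if_neg h]
    obtain ⟨j, hj⟩ := Function.ne_iff.mp h
    exact Finset.prod_eq_zero (Finset.mem_univ j) (by simp [Matrix.one_apply, hj])

lemma tensorN_smul (n : ℕ) (c : Fin n → ℂ) (N : Fin n → Mat2) :
    tensorN n (fun j => c j • N j) = (∏ j, c j) • tensorN n N := by
  ext f g
  simp only [tensorN, Matrix.of_apply, Matrix.smul_apply, smul_eq_mul]
  rw [← Finset.prod_mul_distrib]

lemma tensorN_isHermitian (n : ℕ) (M : Fin n → Mat2) (h : ∀ j, (M j).IsHermitian) :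
    (tensorN n M).IsHermitian := by
  rw [Matrix.IsHermitian, tensorN_conjTranspose]
  exact congrArg (tensorN n) (funext fun j => h j)

/-- The key positivity lemma for tensor products whose slots square to scalars. -/
lemma tensor_dom (n : ℕ) (S : Fin n → Mat2) (g : Fin n → ℝ)
    (hH : ∀ k, (S k).IsHermitian) (hsq : ∀ k, S k * S k = ((g k : ℂ)) • 1)
    (hg : ∀ k, 0 ≤ g k) {r : ℝ} (hr : 0 ≤ r) (hprod : ∏ k, g k ≤ r ^ 2) :
    ((r : ℂ) • 1 - tensorN n S).PosSemidef ∧ ((r : ℂ) • 1 + tensorN n S).PosSemidef := by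
  refine herm_scalar_dom (tensorN_isHermitian n S hH)
    (Finset.prod_nonneg fun k _ => hg k) hprod hr ?_
  rw [tensorN_mul]
  have : (fun j => S j * S j) = fun j => ((g j : ℂ)) • (1 : Mat2) := funext hsq
  rw [this, tensorN_smul, tensorN_one]
  congr 1
  push_cast
  rfl

end TensorLemmas

section Mat2Lemmas

/-- For a traceless 2×2 matrix, `X² = (−det X)•1`. -/
lemma sq_of_traceless (X : Mat2) (h : X.trace = 0) :
    X * X = (X 0 0 * X 0 0 + X 0 1 * X 1 0) • 1 := by
  have h11 : X 1 1 = - X 0 0 := by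
    rw [Matrix.trace_fin_two] at h; linear_combination h
  ext i j
  fin_cases i <;> fin_cases j <;>
    simp [Matrix.mul_apply, Fin.sum_univ_two, Matrix.one_apply, h11] <;> ring

/-- The scalar `γ(X) = −det X` for traceless Hermitian `X`. -/
def gam (X : Mat2) : ℝ := (X 0 0 * X 0 0 + X 0 1 * X 1 0).re

lemma gam_val (X : Mat2) (h : X.IsHermitian) :
    (X 0 0 * X 0 0 + X 0 1 * X 1 0 : ℂ)
      = (((X 0 0).re ^ 2 + Complex.normSq (X 0 1) : ℝ) : ℂ) := by
  have h10 : X 1 0 = star (X 0 1) := (h.apply 1 0).symm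
  have h00 : X 0 0 = ((X 0 0).re : ℂ) :=
    (Complex.conj_eq_iff_re.mp (h.apply 0 0)).symm
  rw [h10, Complex.star_def, Complex.mul_conj]
  rw [h00]
  push_cast
  simp only [Complex.ofReal_re]
  ring

lemma gam_val' (X : Mat2) (h : X.IsHermitian) :
    gam X = (X 0 0).re ^ 2 + Complex.normSq (X 0 1) := by
  unfold gam
  rw [gam_val X h]
  simp [← Complex.ofReal_pow]

lemma gam_eq (X : Mat2) (h : X.IsHermitian) :
    (X 0 0 * X 0 0 + X 0 1 * X 1 0 : ℂ) = (gam X : ℂ) := by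
  rw [gam_val X h, gam_val' X h]

lemma gam_nonneg (X : Mat2) (h : X.IsHermitian) : 0 ≤ gam X := by
  rw [gam_val' X h]
  have := Complex.normSq_nonneg (X 0 1)
  positivity

lemma gam_parallelogram (X Y : Mat2) :
    gam (X + Y) + gam (X - Y) = 2 * gam X + 2 * gam Y := by
  unfold gam
  simp only [Matrix.add_apply, Matrix.sub_apply]
  simp only [Complex.add_re, Complex.sub_re, Complex.mul_re, Complex.add_im, Complex.sub_im,
    Complex.mul_im]
  ring

lemma real_key (p q U V : ℝ) (hp0 : 0 ≤ p) (hp1 : p ≤ 1) (hq0 : 0 ≤ q) (hq1 : q ≤ 1)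
    (hU : 0 ≤ U) (hV : 0 ≤ V) (hU2 : U ^ 2 ≤ p * (1 - p)) (hV2 : V ^ 2 ≤ q * (1 - q)) :
    (p - q) ^ 2 + (U + V) ^ 2 ≤ 1 := by
  nlinarith [sq_nonneg (p * q - (1 - p) * (1 - q)), mul_nonneg hU hV,
    mul_nonneg (mul_nonneg hp0 hq0)
      (mul_nonneg (by linarith : (0:ℝ) ≤ 1 - p) (by linarith : (0:ℝ) ≤ 1 - q)),
    sq_nonneg (U - V), sq_nonneg (U + V)]

lemma psd_diag_re_nonneg {P : Mat2} (h : P.PosSemidef) (i : Fin 2) : 0 ≤ (P i i).re := by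
  have := h.dotProduct_mulVec_nonneg (Pi.single i 1)
  have h2 : (0:ℂ) ≤ P i i := by
    simpa [dotProduct, Matrix.mulVec, Pi.single_apply, Finset.sum_ite_eq] using this
  exact (Complex.le_def.mp h2).1

lemma density_entries {P : Mat2} (h : P.PosSemidef) (htr : P.trace = 1) :
    0 ≤ (P 0 0).re ∧ (P 0 0).re ≤ 1 ∧
    Complex.normSq (P 0 1) ≤ (P 0 0).re * (1 - (P 0 0).re) := by
  have h00 : P 0 0 = ((P 0 0).re : ℂ) :=
    (Complex.conj_eq_iff_re.mp (h.1.apply 0 0)).symm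
  have h11r : P 1 1 = ((P 1 1).re : ℂ) :=
    (Complex.conj_eq_iff_re.mp (h.1.apply 1 1)).symm
  have htr2 : P 0 0 + P 1 1 = 1 := by rw [Matrix.trace_fin_two] at htr; exact htr
  have hsum : (P 0 0).re + (P 1 1).re = 1 := by
    have := congrArg Complex.re htr2; simpa using this
  have h11 : P 1 1 = ((1 - (P 0 0).re : ℝ) : ℂ) := by
    rw [h11r]; congr 1; linarith
  have hp0 := psd_diag_re_nonneg h 0
  have hp1' := psd_diag_re_nonneg h 1
  have hp1 : (P 0 0).re ≤ 1 := by linarith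
  have hdet : 0 ≤ P.det := psd_det_nonneg h
  have hdetval : P.det = (((P 0 0).re * (1 - (P 0 0).re) - Complex.normSq (P 0 1) : ℝ) : ℂ) := by
    rw [Matrix.det_fin_two, h00, h11]
    have h10 : P 1 0 = star (P 0 1) := (h.1.apply 1 0).symm
    rw [h10, Complex.star_def, Complex.mul_conj]
    push_cast
    simp only [Complex.ofReal_re]
    try ring
  have : 0 ≤ (P 0 0).re * (1 - (P 0 0).re) - Complex.normSq (P 0 1) := by
    rw [hdetval] at hdet
    exact_mod_cast (Complex.zero_le_real).mp hdet
  exact ⟨hp0, hp1, by linarith⟩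

/-- The crucial 2×2 bound: the difference of two density matrices `X = ρ₀ − ρ₁`
satisfies `gam X ≤ 1`. -/
lemma gam_diff_le_one {P Q : Mat2} (hP : P.PosSemidef) (hQ : Q.PosSemidef)
    (hPt : P.trace = 1) (hQt : Q.trace = 1) : gam (P - Q) ≤ 1 := by
  obtain ⟨hp0, hp1, hPu⟩ := density_entries hP hPt
  obtain ⟨hq0, hq1, hQv⟩ := density_entries hQ hQt
  have hherm : (P - Q).IsHermitian := hP.1.sub hQ.1
  rw [gam_val' _ hherm]
  have hre : ((P - Q) 0 0).re = (P 0 0).re - (Q 0 0).re := by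
    simp [Matrix.sub_apply]
  have habs : Complex.normSq ((P - Q) 0 1)
      ≤ (‖P 0 1‖ + ‖Q 0 1‖) ^ 2 := by
    rw [Matrix.sub_apply, ← Complex.sq_norm]
    have h1 : ‖P 0 1 - Q 0 1‖ ≤ ‖P 0 1‖ + ‖Q 0 1‖ := by
      simpa using norm_sub_le (P 0 1) (Q 0 1)
    have h2 : (0:ℝ) ≤ ‖P 0 1 - Q 0 1‖ := norm_nonneg _
    nlinarith
  have hU2 : (‖P 0 1‖) ^ 2 ≤ (P 0 0).re * (1 - (P 0 0).re) := by
    rw [Complex.sq_norm]; exact hPu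
  have hV2 : (‖Q 0 1‖) ^ 2 ≤ (Q 0 0).re * (1 - (Q 0 0).re) := by
    rw [Complex.sq_norm]; exact hQv
  have := real_key (P 0 0).re (Q 0 0).re (‖P 0 1‖) (‖Q 0 1‖)
    hp0 hp1 hq0 hq1 (norm_nonneg _) (norm_nonneg _) hU2 hV2
  rw [hre]
  nlinarith [habs]

end Mat2Lemmas

theorem stmt5 (n : ℕ) [NeZero n] (hn : 2 ≤ n)
    (ρ : Fin n → Fin 2 → Fin 2 → Mat2)
    (hρpsd : ∀ j a x, (ρ j a x).PosSemidef)
    (hρtr : ∀ j a x, (ρ j a x).trace = 1)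
    (A : Fin n → Fin 2 → Mat2)
    (hA : ∀ j x, A j x = ρ j 0 x - ρ j 1 x)
    (M : (Fin n → Fin 2) → Matrix (Fin n → Fin 2) (Fin n → Fin 2) ℂ)
    (hMpsd : ∀ s, (M s).PosSemidef)
    (hMsum : ∑ s, M s = 1) :
    ∑ s, (M s * Wop n A s).trace
      ≤ (((2 : ℝ) ^ n * (2 * Real.sqrt 2 * ((n : ℝ) - 1)) : ℝ) : ℂ) := by
  have hnR : (0:ℝ) ≤ (n:ℝ) - 1 := by
    have : (2:ℝ) ≤ (n:ℝ) := by exact_mod_cast hn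
    linarith
  -- basic facts about the observables A
  have hAherm : ∀ j x, (A j x).IsHermitian := fun j x => by
    rw [hA]; exact (hρpsd j 0 x).1.sub (hρpsd j 1 x).1
  have hAtr : ∀ j x, (A j x).trace = 0 := fun j x => by
    rw [hA, Matrix.trace_sub, hρtr, hρtr]; ring
  have hgam1 : ∀ j x, gam (A j x) ≤ 1 := fun j x => by
    rw [hA]; exact gam_diff_le_one (hρpsd j 0 x) (hρpsd j 1 x) (hρtr j 0 x) (hρtr j 1 x)
  have hgam0 : ∀ j x, 0 ≤ gam (A j x) := fun j x => gam_nonneg _ (hAherm j x)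
  set α : ℝ := gam (A 0 0 + A 0 1) with hα
  set β : ℝ := gam (A 0 0 - A 0 1) with hβ
  have hα0 : 0 ≤ α := gam_nonneg _ ((hAherm 0 0).add (hAherm 0 1))
  have hβ0 : 0 ≤ β := gam_nonneg _ ((hAherm 0 0).sub (hAherm 0 1))
  have hαβ : α + β ≤ 4 := by
    have hpar := gam_parallelogram (A 0 0) (A 0 1)
    have h1 := hgam1 0 0; have h2 := hgam1 0 1
    have h3 := hgam0 0 0; have h4 := hgam0 0 1
    rw [hα, hβ]; linarith
  set a : ℝ := Real.sqrt α with ha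
  set b : ℝ := Real.sqrt β with hb
  have ha0 : 0 ≤ a := Real.sqrt_nonneg _
  have hb0 : 0 ≤ b := Real.sqrt_nonneg _
  have ha2 : a ^ 2 = α := Real.sq_sqrt hα0
  have hb2 : b ^ 2 = β := Real.sq_sqrt hβ0
  have hab : a + b ≤ 2 * Real.sqrt 2 := by
    have hs2 : Real.sqrt 2 ^ 2 = 2 := Real.sq_sqrt (by norm_num)
    nlinarith [sq_nonneg (a - b), Real.sqrt_nonneg 2, ha0, hb0]
  -- the index set of non-zero sites
  set F : Finset (Fin n) := Finset.univ.filter (fun j : Fin n => j ≠ 0) with hF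
  have hFerase : F = Finset.univ.erase 0 := by
    ext j; simp [hF]
  have hcardF : (F.card : ℂ) = (n : ℂ) - 1 := by
    rw [hFerase, Finset.card_erase_of_mem (Finset.mem_univ _), Finset.card_univ,
      Fintype.card_fin]
    have h1 : 1 ≤ n := by omega
    push_cast [Nat.cast_sub h1]
    ring
  -- the two families of tensor operators
  set T0 : Matrix (Fin n → Fin 2) (Fin n → Fin 2) ℂ :=
    tensorN n (fun j => if j = 0 then A 0 0 + A 0 1 else A j 0) with hT0def
  have hT0dom : ((a:ℂ) • 1 - T0).PosSemidef ∧ ((a:ℂ) • 1 + T0).PosSemidef := by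
    apply tensor_dom n _ (fun j => if j = 0 then α else gam (A j 0))
    · intro k
      by_cases hk : k = 0
      · simpa [hk] using (hAherm 0 0).add (hAherm 0 1)
      · simpa [hk] using hAherm k 0
    · intro k
      by_cases hk : k = 0
      · simp only [hk, eq_self_iff_true, if_true]
        rw [sq_of_traceless _ (by rw [Matrix.trace_add, hAtr, hAtr]; ring),
          gam_eq _ ((hAherm 0 0).add (hAherm 0 1)), hα]
      · simp only [if_neg hk]
        rw [sq_of_traceless _ (hAtr k 0), gam_eq _ (hAherm k 0)]
    · intro k
      by_cases hk : k = 0 <;> simp [hk, hα0, hgam0]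
    · exact ha0
    · rw [ha2]
      rw [← Finset.mul_prod_erase Finset.univ _ (Finset.mem_univ (0 : Fin n))]
      simp only [if_pos rfl]
      have hle1 : ∏ j ∈ Finset.univ.erase (0 : Fin n),
          (if j = 0 then α else gam (A j 0)) ≤ 1 := by
        apply Finset.prod_le_one
        · intro i hi
          have hi0 : i ≠ 0 := Finset.ne_of_mem_erase hi
          simp [hi0, hgam0]
        · intro i hi
          have hi0 : i ≠ 0 := Finset.ne_of_mem_erase hi
          simp [hi0, hgam1]
      exact mul_le_of_le_one_right hα0 hle1
  set T1 : Fin n → Matrix (Fin n → Fin 2) (Fin n → Fin 2) ℂ :=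
    fun j => tensorN n (fun k => if k = 0 then A 0 0 - A 0 1
      else if k = j then A j 1 else 1) with hT1def
  have hT1dom : ∀ j ∈ F, ((b:ℂ) • 1 - T1 j).PosSemidef ∧ ((b:ℂ) • 1 + T1 j).PosSemidef := by
    intro j hj
    have hj0 : j ≠ 0 := by rw [hFerase] at hj; exact Finset.ne_of_mem_erase hj
    apply tensor_dom n _ (fun k => if k = 0 then β else if k = j then gam (A j 1) else 1)
    · intro k
      by_cases hk : k = 0
      · simpa [hk] using (hAherm 0 0).sub (hAherm 0 1)
      · by_cases hkj : k = j
        · simpa [hk, hkj, hj0] using hAherm j 1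
        · simpa [hk, hkj] using Matrix.isHermitian_one
    · intro k
      by_cases hk : k = 0
      · simp only [hk, eq_self_iff_true, if_true]
        rw [sq_of_traceless _ (by rw [Matrix.trace_sub, hAtr, hAtr]; ring),
          gam_eq _ ((hAherm 0 0).sub (hAherm 0 1)), hβ]
      · by_cases hkj : k = j
        · simp only [if_neg hk, hkj, eq_self_iff_true, if_true, if_neg hj0]
          rw [sq_of_traceless _ (hAtr j 1), gam_eq _ (hAherm j 1)]
        · simp only [if_neg hk, if_neg hkj]
          norm_num
    · intro k
      by_cases hk : k = 0
      · simp [hk, hβ0]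
      · by_cases hkj : k = j <;> simp [hk, hkj, hj0, hgam0]
    · exact hb0
    · rw [hb2]
      rw [← Finset.mul_prod_erase Finset.univ _ (Finset.mem_univ (0 : Fin n))]
      simp only [if_pos rfl]
      have hle1 : ∏ k ∈ Finset.univ.erase (0 : Fin n),
          (if k = 0 then β else if k = j then gam (A j 1) else 1) ≤ 1 := by
        apply Finset.prod_le_one
        · intro i hi
          have hi0 : i ≠ 0 := Finset.ne_of_mem_erase hi
          by_cases hij : i = j <;> simp [hi0, hij, hj0, hgam0]
        · intro i hi
          have hi0 : i ≠ 0 := Finset.ne_of_mem_erase hi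
          by_cases hij : i = j <;> simp [hi0, hij, hj0, hgam1]
      exact mul_le_of_le_one_right hβ0 hle1
  -- sign handling
  have hsign : ∀ (r : ℝ) (T : Matrix (Fin n → Fin 2) (Fin n → Fin 2) ℂ) (v : Fin 2),
      ((r:ℂ) • 1 - T).PosSemidef → ((r:ℂ) • 1 + T).PosSemidef →
      ((r:ℂ) • 1 - ((-1:ℂ) ^ (v : ℕ)) • T).PosSemidef := by
    intro r T v h1 h2
    fin_cases v
    · simpa using h1
    · simpa [sub_neg_eq_add] using h2
  -- the per-setting PSD bound
  have key : ∀ s, (M s * Wop n A s).trace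
      ≤ ((2 * Real.sqrt 2 * ((n:ℝ) - 1) : ℝ) : ℂ) * (M s).trace := by
    intro s
    have hpsdW : (((2 * Real.sqrt 2 * ((n:ℝ) - 1) : ℝ) : ℂ) • 1 - Wop n A s).PosSemidef := by
      have hdecomp : ((2 * Real.sqrt 2 * ((n:ℝ) - 1) : ℝ) : ℂ)
            • (1 : Matrix (Fin n → Fin 2) (Fin n → Fin 2) ℂ) - Wop n A s
          = ((2 * Real.sqrt 2 * ((n:ℝ)-1) - ((n:ℝ)-1) * a - ((n:ℝ)-1) * b : ℝ) : ℂ) • 1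
            + (((n:ℝ) - 1 : ℝ) : ℂ) • ((a:ℂ) • 1 - ((-1:ℂ) ^ ((s 0 : ℕ))) • T0)
            + ∑ j ∈ F, ((b:ℂ) • 1 - ((-1:ℂ) ^ ((s j : ℕ))) • T1 j) := by
        rw [Wop, Finset.sum_sub_distrib, Finset.sum_const,
          ← Nat.cast_smul_eq_nsmul ℂ, hcardF]
        push_cast
        module
      rw [hdecomp]
      refine Matrix.PosSemidef.add (Matrix.PosSemidef.add ?_ ?_) ?_
      · apply psd_smul _ Matrix.PosSemidef.one
        rw [Complex.zero_le_real]
        nlinarith [hab, hnR]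
      · apply psd_smul
        · rw [Complex.zero_le_real]; exact hnR
        · exact hsign a T0 (s 0) hT0dom.1 hT0dom.2
      · apply psd_sum
        intro j hj
        exact hsign b (T1 j) (s j) (hT1dom j hj).1 (hT1dom j hj).2
    have h0 := trace_mul_nonneg (hMpsd s) hpsdW
    rw [Matrix.mul_sub, Matrix.mul_smul, Matrix.mul_one, Matrix.trace_sub,
      Matrix.trace_smul, smul_eq_mul] at h0
    exact sub_nonneg.mp h0
  calc ∑ s, (M s * Wop n A s).trace
      ≤ ∑ s : Fin n → Fin 2, ((2 * Real.sqrt 2 * ((n:ℝ) - 1) : ℝ) : ℂ) * (M s).trace :=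
        Finset.sum_le_sum (fun s _ => key s)
    _ = ((2 * Real.sqrt 2 * ((n:ℝ) - 1) : ℝ) : ℂ) * (∑ s, M s).trace := by
        rw [Matrix.trace_sum, Finset.mul_sum]
    _ = ((2 * Real.sqrt 2 * ((n:ℝ) - 1) : ℝ) : ℂ) * ((2:ℂ) ^ n) := by
        rw [hMsum, Matrix.trace_one]
        congr 1
        simp [Fintype.card_fun]
    _ = (((2 : ℝ) ^ n * (2 * Real.sqrt 2 * ((n : ℝ) - 1)) : ℝ) : ℂ) := by
        push_cast
        ring
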